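/- Let f: ℝⁿ → ℝ be a KAN with L+1 layers of widths n = n₀, n₁, ..., n_L, n_{L+1} = 1, in which every activation function is piecewise linear with at most k pieces. Then the number of linear regions of f is at most k^(n_L + Σ_{i=0}^{L−1} nᵢ·nᵢ₊₁). -/
import Mathlib


/-- A function φ : ℝ → ℝ is piecewise linear with at most k pieces. -/
def PWL1 (k : ℕ) (φ : ℝ → ℝ) : Prop :=
  ∃ P : Fin k → Set ℝ, (∀ x, ∃ i, x ∈ P i) ∧
    ∀ i, ∃ a c : ℝ, ∀ x ∈ P i, φ x = a * x + c

/-- A function f : ℝⁿ → ℝᵐ is piecewise linear with at most k pieces. -/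
def PWL (n m k : ℕ) (f : (Fin n → ℝ) → (Fin m → ℝ)) : Prop :=
  ∃ P : Fin k → Set (Fin n → ℝ), (∀ x, ∃ i, x ∈ P i) ∧
    ∀ i, ∃ (A : Matrix (Fin m) (Fin n) ℝ) (c : Fin m → ℝ),
      ∀ x ∈ P i, f x = A.mulVec x + c

/-- A single KAN layer: x ↦ (Σ_p φ_p^q(x_p))_q. -/
def kanLayer {n m : ℕ} (φ : Fin m → Fin n → ℝ → ℝ) (x : Fin n → ℝ) : Fin m → ℝ :=
  fun q => ∑ p, φ q p (x p)

/-- `IsKANk k n m f L e` : f : ℝⁿ → ℝᵐ is a KAN with L layers whose activation functions are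
all piecewise linear with at most k pieces, where e = Σᵢ nᵢ·nᵢ₊₁ accumulates the products of
consecutive layer widths n = n₀, n₁, ..., n_L = m. -/
inductive IsKANk (k : ℕ) : (n m : ℕ) → ((Fin n → ℝ) → (Fin m → ℝ)) → ℕ → ℕ → Prop
  | layer {n m : ℕ} (φ : Fin m → Fin n → ℝ → ℝ) (h : ∀ q p, PWL1 k (φ q p)) :
      IsKANk k n m (kanLayer φ) 1 (n * m)
  | comp {n m l L e : ℕ} {f : (Fin n → ℝ) → (Fin m → ℝ)} (hf : IsKANk k n m f L e)
      (φ : Fin l → Fin m → ℝ → ℝ) (h : ∀ q p, PWL1 k (φ q p)) :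
      IsKANk k n l (fun x => kanLayer φ (f x)) (L + 1) (e + m * l)

lemma pwl_layer {n m k : ℕ} (φ : Fin m → Fin n → ℝ → ℝ) (h : ∀ q p, PWL1 k (φ q p)) :
    PWL n m (k ^ (n * m)) (kanLayer φ) := by
  choose P hcov a c haff using h
  have hcard : Fintype.card (Fin m × Fin n → Fin k) = k ^ (n * m) := by
    simp [Fintype.card_fun, mul_comm]
  let E : Fin (k ^ (n * m)) ≃ (Fin m × Fin n → Fin k) :=
    (Fintype.equivFinOfCardEq hcard).symm
  refine ⟨fun i => {x | ∀ q p, x p ∈ P q p (E i (q, p))}, ?_, ?_⟩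
  · intro x
    choose σ hσ using fun q p => hcov q p (x p)
    exact ⟨E.symm (fun qp => σ qp.1 qp.2), by simpa using hσ⟩
  · intro i
    refine ⟨fun q p => a q p (E i (q, p)), fun q => ∑ p, c q p (E i (q, p)), ?_⟩
    intro x hx
    funext q
    simp only [kanLayer, Matrix.mulVec, dotProduct, Pi.add_apply]
    rw [← Finset.sum_add_distrib]
    exact Finset.sum_congr rfl fun p _ => haff q p (E i (q, p)) (x p) (hx q p)

lemma pwl_comp {n m l K K' : ℕ} {f : (Fin n → ℝ) → (Fin m → ℝ)}
    {g : (Fin m → ℝ) → (Fin l → ℝ)} (hf : PWL n m K f) (hg : PWL m l K' g) :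
    PWL n l (K * K') (fun x => g (f x)) := by
  obtain ⟨P, hPcov, hPaff⟩ := hf
  obtain ⟨Q, hQcov, hQaff⟩ := hg
  let E : Fin (K * K') ≃ Fin K × Fin K' := finProdFinEquiv.symm
  refine ⟨fun i => P (E i).1 ∩ f ⁻¹' Q (E i).2, ?_, ?_⟩
  · intro x
    obtain ⟨i, hi⟩ := hPcov x
    obtain ⟨j, hj⟩ := hQcov (f x)
    exact ⟨E.symm (i, j), by simpa using ⟨hi, hj⟩⟩
  · intro i
    obtain ⟨A, cA, hA⟩ := hPaff (E i).1
    obtain ⟨B, cB, hB⟩ := hQaff (E i).2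
    refine ⟨B * A, B.mulVec cA + cB, fun x hx => ?_⟩
    show g (f x) = _
    rw [hB (f x) hx.2, hA x hx.1, Matrix.mulVec_add, Matrix.mulVec_mulVec, add_assoc]

lemma isKANk_pwl {k n m L e : ℕ} {f : (Fin n → ℝ) → (Fin m → ℝ)}
    (hf : IsKANk k n m f L e) : PWL n m (k ^ e) f := by
  induction hf with
  | layer φ h => exact pwl_layer φ h
  | comp hf φ h ih =>
    rw [pow_add]
    exact pwl_comp ih (pwl_layer φ h)

/-- a KAN f : ℝⁿ → ℝ with layer widths n = n₀, ..., n_L, n_{L+1} = 1 whose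
activation functions are piecewise linear with at most k pieces has at most
k^(n_L·1 + Σ_{i=0}^{L−1} nᵢ·nᵢ₊₁) linear regions, i.e. it is piecewise linear with at most
that many pieces. -/
theorem stmt5 (k n L e : ℕ) (f : (Fin n → ℝ) → (Fin 1 → ℝ))
    (hf : IsKANk k n 1 f L e) : PWL n 1 (k ^ e) f := by
  exact isKANk_pwl hf
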